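/- For all integers i ≥ 1 and b with 4 ≤ b ≤ 2i + 6, the convex hull P of the points (0,0), (b−4, 0), (i+1, 1), (0, 2) in ℝ² is a convex lattice polygon with exactly b lattice points on its boundary and exactly i lattice points in its interior. -/

import Mathlib

open Set MeasureTheory

noncomputable section

/-- A point of the plane is a lattice point if both coordinates are integers. -/
def latticePt (x : ℝ × ℝ) : Prop := (∃ m : ℤ, x.1 = m) ∧ (∃ n : ℤ, x.2 = n)

/-- A convex lattice polygon: the convex hull of finitely many lattice points,
with nonempty interior (i.e. 2-dimensional). -/
def IsConvexLatticePolygon (P : Set (ℝ × ℝ)) : Prop :=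
  (∃ V : Finset (ℝ × ℝ), (∀ v ∈ V, latticePt v) ∧ P = convexHull ℝ (V : Set (ℝ × ℝ))) ∧
    (interior P).Nonempty

/-- Number of lattice points on the boundary of `P`. -/
def bcount (P : Set (ℝ × ℝ)) : ℕ := {x | x ∈ frontier P ∧ latticePt x}.ncard

/-- Number of lattice points in the interior of `P`. -/
def icount (P : Set (ℝ × ℝ)) : ℕ := {x | x ∈ interior P ∧ latticePt x}.ncard

/-- The area of `P` (two-dimensional Lebesgue measure). -/
def area (P : Set (ℝ × ℝ)) : ℝ := (volume P).toReal

/-- The affine map `x ↦ A x + t` given by an integer matrix `A` and integer vector `t`. -/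
def affineLatticeMap (A : Matrix (Fin 2) (Fin 2) ℤ) (t : ℤ × ℤ) (x : ℝ × ℝ) : ℝ × ℝ :=
  ((A 0 0 : ℝ) * x.1 + (A 0 1 : ℝ) * x.2 + (t.1 : ℝ),
   (A 1 0 : ℝ) * x.1 + (A 1 1 : ℝ) * x.2 + (t.2 : ℝ))

/-- `P` and `Q` are lattice equivalent: `Q = Φ(P)` for an affine map `Φ(x) = A x + t`
with `A` an integer matrix of determinant `±1` and `t` an integer vector. -/
def LatticeEquiv (P Q : Set (ℝ × ℝ)) : Prop :=
  ∃ (A : Matrix (Fin 2) (Fin 2) ℤ) (t : ℤ × ℤ),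
    (A.det = 1 ∨ A.det = -1) ∧ Q = affineLatticeMap A t '' P

/-- The dilated standard triangle `kΔ = conv{(0,0), (k,0), (0,k)}`. -/
def stdTriangle (k : ℕ) : Set (ℝ × ℝ) :=
  convexHull ℝ {((0 : ℝ), (0 : ℝ)), ((k : ℝ), (0 : ℝ)), ((0 : ℝ), (k : ℝ))}

/-- `P⁽¹⁾`: the convex hull of the lattice points in the interior of `P`. -/
def innerHull (P : Set (ℝ × ℝ)) : Set (ℝ × ℝ) :=
  convexHull ℝ {x | x ∈ interior P ∧ latticePt x}


def sreg (i b : ℤ) : Set (ℝ × ℝ) :=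
  {p | 0 ≤ p.1 ∧ 0 ≤ p.2 ∧ p.1 ≤ ((b:ℝ)-4) + ((i:ℝ)+5-b)*p.2 ∧ p.1 ≤ ((i:ℝ)+1)*(2-p.2)}

def sregO (i b : ℤ) : Set (ℝ × ℝ) :=
  {p | 0 < p.1 ∧ 0 < p.2 ∧ p.1 < ((b:ℝ)-4) + ((i:ℝ)+5-b)*p.2 ∧ p.1 < ((i:ℝ)+1)*(2-p.2)}


lemma mem_seg_horiz {x X y : ℝ} (h0 : 0 ≤ x) (h1 : x ≤ X) :
    ((x, y) : ℝ × ℝ) ∈ segment ℝ ((0:ℝ), y) (X, y) := by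
  rcases eq_or_lt_of_le (h0.trans h1) with hX | hX
  · have hx0 : x = 0 := le_antisymm (by rw [← hX] at h1; exact h1) h0
    subst hx0
    exact left_mem_segment ℝ _ _
  · refine ⟨1 - x / X, x / X, ?_, by positivity, by ring, ?_⟩
    · have : x / X ≤ 1 := div_le_one_of_le₀ h1 hX.le
      linarith
    · simp only [Prod.smul_mk, smul_eq_mul, Prod.mk_add_mk, Prod.mk.injEq]
      constructor
      · field_simp; ring
      · ring

lemma hull_eq (i b : ℤ) (hi : 1 ≤ i) (hb4 : 4 ≤ b) (hb : b ≤ 2 * i + 6) :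
    convexHull ℝ {((0 : ℝ), (0 : ℝ)), ((b : ℝ) - 4, (0 : ℝ)),
        ((i : ℝ) + 1, (1 : ℝ)), ((0 : ℝ), (2 : ℝ))} = sreg i b := by
  have hi' : (1:ℝ) ≤ (i:ℝ) := by exact_mod_cast hi
  have hb4' : (4:ℝ) ≤ (b:ℝ) := by exact_mod_cast hb4
  have hb' : (b:ℝ) ≤ 2*(i:ℝ)+6 := by exact_mod_cast hb
  apply le_antisymm
  · apply convexHull_min
    · rintro p hp
      simp only [mem_insert_iff, mem_singleton_iff] at hp
      rcases hp with rfl | rfl | rfl | rfl <;>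
        simp only [sreg, mem_setOf_eq] <;>
        refine ⟨?_, ?_, ?_, ?_⟩ <;> nlinarith
    · rintro p hp q hq a c ha hc hac
      simp only [sreg, mem_setOf_eq] at *
      obtain ⟨hp1, hp2, hp3, hp4⟩ := hp
      obtain ⟨hq1, hq2, hq3, hq4⟩ := hq
      simp only [Prod.fst_add, Prod.snd_add, Prod.smul_fst, Prod.smul_snd, smul_eq_mul]
      refine ⟨by nlinarith, by nlinarith, by nlinarith, by nlinarith⟩
  · rintro ⟨x, y⟩ ⟨hx0, hy0, hf, hg⟩
    set S : Set (ℝ × ℝ) := {((0 : ℝ), (0 : ℝ)), ((b : ℝ) - 4, (0 : ℝ)),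
        ((i : ℝ) + 1, (1 : ℝ)), ((0 : ℝ), (2 : ℝ))} with hS
    have hOm : ((0:ℝ), (0:ℝ)) ∈ convexHull ℝ S := subset_convexHull ℝ S (by simp [hS])
    have hAm : ((b:ℝ) - 4, (0:ℝ)) ∈ convexHull ℝ S := subset_convexHull ℝ S (by simp [hS])
    have hBm : ((i:ℝ) + 1, (1:ℝ)) ∈ convexHull ℝ S := subset_convexHull ℝ S (by simp [hS])
    have hCm : ((0:ℝ), (2:ℝ)) ∈ convexHull ℝ S := subset_convexHull ℝ S (by simp [hS])
    have hy2 : y ≤ 2 := by nlinarith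
    have hconv := convex_convexHull ℝ S
    have hleft : ((0:ℝ), y) ∈ convexHull ℝ S := by
      have : ((0:ℝ), y) ∈ segment ℝ ((0:ℝ),(0:ℝ)) ((0:ℝ),(2:ℝ)) := by
        refine ⟨1 - y/2, y/2, by linarith, by linarith, by ring, ?_⟩
        simp only [Prod.smul_mk, smul_eq_mul, Prod.mk_add_mk, Prod.mk.injEq]
        constructor <;> ring
      exact hconv.segment_subset hOm hCm this
    rcases le_total y 1 with hy1 | hy1
    · have hright : (((b:ℝ)-4) + ((i:ℝ)+5-b)*y, y) ∈ convexHull ℝ S := by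
        have : (((b:ℝ)-4) + ((i:ℝ)+5-b)*y, y) ∈
            segment ℝ ((b:ℝ) - 4, (0:ℝ)) ((i:ℝ) + 1, (1:ℝ)) := by
          refine ⟨1 - y, y, by linarith, hy0, by ring, ?_⟩
          simp only [Prod.smul_mk, smul_eq_mul, Prod.mk_add_mk, Prod.mk.injEq]
          constructor <;> ring
        exact hconv.segment_subset hAm hBm this
      exact hconv.segment_subset hleft hright (mem_seg_horiz hx0 hf)
    · have hright : (((i:ℝ)+1)*(2-y), y) ∈ convexHull ℝ S := by
        have : (((i:ℝ)+1)*(2-y), y) ∈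
            segment ℝ ((i:ℝ) + 1, (1:ℝ)) ((0:ℝ), (2:ℝ)) := by
          refine ⟨2 - y, y - 1, by linarith, by linarith, by ring, ?_⟩
          simp only [Prod.smul_mk, smul_eq_mul, Prod.mk_add_mk, Prod.mk.injEq]
          constructor <;> ring
        exact hconv.segment_subset hBm hCm this
      exact hconv.segment_subset hleft hright (mem_seg_horiz hx0 hg)


lemma sregO_open (i b : ℤ) : IsOpen (sregO i b) := by
  unfold sregO
  simp only [setOf_and]
  exact ((isOpen_lt continuous_const continuous_fst).inter
    ((isOpen_lt continuous_const continuous_snd).inter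
      ((isOpen_lt continuous_fst (by fun_prop)).inter
        (isOpen_lt continuous_fst (by fun_prop)))))

lemma sreg_closed (i b : ℤ) : IsClosed (sreg i b) := by
  unfold sreg
  simp only [setOf_and]
  exact ((isClosed_le continuous_const continuous_fst).inter
    ((isClosed_le continuous_const continuous_snd).inter
      ((isClosed_le continuous_fst (by fun_prop)).inter
        (isClosed_le continuous_fst (by fun_prop)))))

lemma interior_sreg (i b : ℤ) : interior (sreg i b) = sregO i b := by
  apply subset_antisymm
  · intro p hp
    rw [mem_interior_iff_mem_nhds, Metric.mem_nhds_iff] at hp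
    obtain ⟨ε, hε, hball⟩ := hp
    have hd : ∀ q : ℝ × ℝ, dist q.1 p.1 < ε → dist q.2 p.2 < ε → q ∈ sreg i b := by
      intro q h1 h2
      exact hball (by rw [Metric.mem_ball, Prod.dist_eq]; exact max_lt h1 h2)
    have e1 : dist (p.1 + ε/2) p.1 < ε := by
      rw [Real.dist_eq]
      have : p.1 + ε/2 - p.1 = ε/2 := by ring
      rw [this, abs_of_pos (by linarith)]; linarith
    have e2 : dist (p.1 - ε/2) p.1 < ε := by
      rw [Real.dist_eq]
      have : p.1 - ε/2 - p.1 = -(ε/2) := by ring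
      rw [this, abs_neg, abs_of_pos (by linarith)]; linarith
    have e3 : dist (p.2 - ε/2) p.2 < ε := by
      rw [Real.dist_eq]
      have : p.2 - ε/2 - p.2 = -(ε/2) := by ring
      rw [this, abs_neg, abs_of_pos (by linarith)]; linarith
    have h1 := hd (p.1 + ε/2, p.2) e1 (by simpa using hε)
    have h2 := hd (p.1 - ε/2, p.2) e2 (by simpa using hε)
    have h3 := hd (p.1, p.2 - ε/2) (by simpa using hε) e3
    simp only [sreg, mem_setOf_eq] at h1 h2 h3
    exact ⟨by linarith [h2.1], by linarith [h3.2.1],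
      by linarith [h1.2.2.1], by linarith [h1.2.2.2]⟩
  · apply interior_maximal _ (sregO_open i b)
    rintro p ⟨a1, a2, a3, a4⟩
    exact ⟨a1.le, a2.le, a3.le, a4.le⟩


lemma int_lattice_eq (i b : ℤ) (hi : 1 ≤ i) (hb4 : 4 ≤ b) (hb : b ≤ 2*i+6) :
    {x : ℝ × ℝ | x ∈ sregO i b ∧ latticePt x} =
      (fun m : ℤ => ((m:ℝ), (1:ℝ))) '' (Set.Icc 1 i) := by
  have hi' : (1:ℝ) ≤ (i:ℝ) := by exact_mod_cast hi
  ext ⟨x, y⟩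
  simp only [sregO, latticePt, mem_setOf_eq, mem_image, Set.mem_Icc]
  constructor
  · rintro ⟨⟨hx0, hy0, hf, hg⟩, ⟨m, hm⟩, ⟨n, hn⟩⟩
    subst hm; subst hn
    have hn0 : 0 < n := by exact_mod_cast hy0
    have hn2 : (n:ℝ) < 2 := by nlinarith
    have hn2' : n < 2 := by exact_mod_cast hn2
    have hn1 : n = 1 := by omega
    subst hn1
    have hm0 : 0 < m := by exact_mod_cast hx0
    push_cast at hf hg
    have hmi : (m:ℝ) < (i:ℝ) + 1 := by linarith
    have hmi' : m < i + 1 := by exact_mod_cast hmi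
    exact ⟨m, ⟨by omega, by omega⟩, by norm_num⟩
  · rintro ⟨m, ⟨h1, h2⟩, heq⟩
    obtain ⟨rfl, rfl⟩ : (m:ℝ) = x ∧ (1:ℝ) = y := by
      simpa [Prod.ext_iff] using heq
    have h1' : (1:ℝ) ≤ (m:ℝ) := by exact_mod_cast h1
    have h2' : (m:ℝ) ≤ (i:ℝ) := by exact_mod_cast h2
    refine ⟨⟨by linarith, by norm_num, by linarith, by linarith⟩, ⟨m, rfl⟩, ⟨1, by norm_num⟩⟩

lemma fr_lattice_eq (i b : ℤ) (hi : 1 ≤ i) (hb4 : 4 ≤ b) (hb : b ≤ 2*i+6) :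
    {x : ℝ × ℝ | x ∈ sreg i b \ sregO i b ∧ latticePt x} =
      ((fun m : ℤ => ((m:ℝ), (0:ℝ))) '' (Set.Icc 0 (b-4))) ∪
        {((0:ℝ), (1:ℝ)), ((i:ℝ)+1, (1:ℝ)), ((0:ℝ), (2:ℝ))} := by
  have hi' : (1:ℝ) ≤ (i:ℝ) := by exact_mod_cast hi
  have hb4' : (4:ℝ) ≤ (b:ℝ) := by exact_mod_cast hb4
  have hb' : (b:ℝ) ≤ 2*(i:ℝ)+6 := by exact_mod_cast hb
  ext ⟨x, y⟩
  simp only [sreg, sregO, latticePt, mem_setOf_eq, mem_diff, mem_image, Set.mem_Icc,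
    mem_union, mem_insert_iff, mem_singleton_iff, Prod.mk.injEq]
  constructor
  · rintro ⟨⟨⟨hx0, hy0, hf, hg⟩, hnotO⟩, ⟨m, hm⟩, ⟨n, hn⟩⟩
    subst hm; subst hn
    have hm0 : 0 ≤ m := by exact_mod_cast hx0
    have hn0 : 0 ≤ n := by exact_mod_cast hy0
    have hn2 : n ≤ 2 := by
      have : (n:ℝ) ≤ 2 := by nlinarith
      exact_mod_cast this
    have hfZ : m ≤ b - 4 + (i + 5 - b) * n := by
      have : (m:ℝ) ≤ ((b - 4 + (i + 5 - b) * n : ℤ) : ℝ) := by push_cast; linarith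
      exact_mod_cast this
    have hgZ : m ≤ (i + 1) * (2 - n) := by
      have : (m:ℝ) ≤ (((i + 1) * (2 - n) : ℤ) : ℝ) := by push_cast; linarith
      exact_mod_cast this
    interval_cases n
    · exact Or.inl ⟨m, ⟨hm0, by omega⟩, by norm_num⟩
    · have hmle : m ≤ i + 1 := by omega
      have : m = 0 ∨ m = i + 1 := by
        by_contra hcon
        push_neg at hcon
        have h1 : 0 < m := by omega
        have h2 : m < i + 1 := by omega
        apply hnotO
        refine ⟨by exact_mod_cast h1, by norm_num, ?_, ?_⟩
        · have : (m:ℝ) < (i:ℝ) + 1 := by exact_mod_cast h2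
          push_cast; linarith
        · have : (m:ℝ) < (i:ℝ) + 1 := by exact_mod_cast h2
          push_cast; linarith
      rcases this with rfl | rfl
      · exact Or.inr (Or.inl ⟨by norm_num, by norm_num⟩)
      · exact Or.inr (Or.inr (Or.inl ⟨by push_cast; ring, by norm_num⟩))
    · have : m = 0 := by omega
      subst this
      exact Or.inr (Or.inr (Or.inr ⟨by norm_num, by norm_num⟩))
  · rintro (⟨m, ⟨h0, h1⟩, heq⟩ | ⟨rfl, rfl⟩ | ⟨rfl, rfl⟩ | ⟨rfl, rfl⟩)
    · obtain ⟨rfl, rfl⟩ : (m:ℝ) = x ∧ (0:ℝ) = y := by simpa [Prod.ext_iff] using heq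
      have h0' : (0:ℝ) ≤ (m:ℝ) := by exact_mod_cast h0
      have h1' : (m:ℝ) ≤ (b:ℝ) - 4 := by
        have : (m:ℝ) ≤ ((b - 4 : ℤ) : ℝ) := by exact_mod_cast h1
        push_cast at this; linarith
      refine ⟨⟨⟨h0', le_refl 0, by linarith, by linarith⟩, ?_⟩, ⟨m, rfl⟩, ⟨0, by norm_num⟩⟩
      rintro ⟨-, hy, -, -⟩
      exact lt_irrefl _ hy
    · refine ⟨⟨⟨le_refl 0, by norm_num, by linarith, by linarith⟩, ?_⟩, ⟨0, by norm_num⟩, ⟨1, by norm_num⟩⟩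
      rintro ⟨hx, -, -, -⟩
      exact lt_irrefl _ hx
    · refine ⟨⟨⟨by linarith, by norm_num, by linarith, by linarith⟩, ?_⟩, ⟨i+1, by push_cast; ring⟩, ⟨1, by norm_num⟩⟩
      rintro ⟨-, -, hcon, -⟩
      linarith
    · refine ⟨⟨⟨le_refl 0, by norm_num, by linarith, by linarith⟩, ?_⟩, ⟨0, by norm_num⟩, ⟨2, by norm_num⟩⟩
      rintro ⟨hx, -, -, -⟩
      exact lt_irrefl _ hx


/-- For integers `i ≥ 1` and `4 ≤ b ≤ 2 i + 6`, the convex hull of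
`(0,0), (b−4,0), (i+1,1), (0,2)` is a convex lattice polygon with exactly `b`
boundary lattice points and exactly `i` interior lattice points. -/
theorem shoe_family (i b : ℤ) (hi : 1 ≤ i) (hb4 : 4 ≤ b) (hb : b ≤ 2 * i + 6) :
    IsConvexLatticePolygon
      (convexHull ℝ {((0 : ℝ), (0 : ℝ)), ((b : ℝ) - 4, (0 : ℝ)),
        ((i : ℝ) + 1, (1 : ℝ)), ((0 : ℝ), (2 : ℝ))}) ∧
    (bcount (convexHull ℝ {((0 : ℝ), (0 : ℝ)), ((b : ℝ) - 4, (0 : ℝ)),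
        ((i : ℝ) + 1, (1 : ℝ)), ((0 : ℝ), (2 : ℝ))}) : ℤ) = b ∧
    (icount (convexHull ℝ {((0 : ℝ), (0 : ℝ)), ((b : ℝ) - 4, (0 : ℝ)),
        ((i : ℝ) + 1, (1 : ℝ)), ((0 : ℝ), (2 : ℝ))}) : ℤ) = i := by
  set S : Set (ℝ × ℝ) := {((0 : ℝ), (0 : ℝ)), ((b : ℝ) - 4, (0 : ℝ)),
      ((i : ℝ) + 1, (1 : ℝ)), ((0 : ℝ), (2 : ℝ))} with hS
  have hP : convexHull ℝ S = sreg i b := hull_eq i b hi hb4 hb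
  have hInt : interior (convexHull ℝ S) = sregO i b := by
    rw [hP, interior_sreg]
  have hFr : frontier (convexHull ℝ S) = sreg i b \ sregO i b := by
    rw [hP, (sreg_closed i b).frontier_eq, interior_sreg]
  have hi' : (1:ℝ) ≤ (i:ℝ) := by exact_mod_cast hi
  have hb4' : (4:ℝ) ≤ (b:ℝ) := by exact_mod_cast hb4
  have hb' : (b:ℝ) ≤ 2*(i:ℝ)+6 := by exact_mod_cast hb
  have hinj1 : Function.Injective (fun m : ℤ => ((m:ℝ), (1:ℝ))) := by
    intro a c h
    simpa [Prod.ext_iff] using h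
  have hinj0 : Function.Injective (fun m : ℤ => ((m:ℝ), (0:ℝ))) := by
    intro a c h
    simpa [Prod.ext_iff] using h
  refine ⟨⟨⟨{((0 : ℝ), (0 : ℝ)), ((b : ℝ) - 4, (0 : ℝ)),
      ((i : ℝ) + 1, (1 : ℝ)), ((0 : ℝ), (2 : ℝ))}, ?_, ?_⟩, ?_⟩, ?_, ?_⟩
  · intro v hv
    simp only [Finset.mem_insert, Finset.mem_singleton] at hv
    rcases hv with rfl | rfl | rfl | rfl
    · exact ⟨⟨0, by norm_num⟩, ⟨0, by norm_num⟩⟩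
    · exact ⟨⟨b - 4, by push_cast; ring⟩, ⟨0, by norm_num⟩⟩
    · exact ⟨⟨i + 1, by push_cast; ring⟩, ⟨1, by norm_num⟩⟩
    · exact ⟨⟨0, by norm_num⟩, ⟨2, by norm_num⟩⟩
  · congr 1
    rw [hS]
    simp only [Finset.coe_insert, Finset.coe_singleton]
  · rw [hInt]
    refine ⟨(1/2, 1), ?_, by norm_num, by push_cast; nlinarith, by push_cast; nlinarith⟩
    norm_num
  · -- boundary count
    show ((bcount (convexHull ℝ S) : ℤ)) = b
    unfold bcount
    rw [show {x | x ∈ frontier (convexHull ℝ S) ∧ latticePt x} =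
        {x : ℝ × ℝ | x ∈ sreg i b \ sregO i b ∧ latticePt x} by rw [hFr],
      fr_lattice_eq i b hi hb4 hb]
    have hA : ((fun m : ℤ => ((m:ℝ), (0:ℝ))) '' (Set.Icc 0 (b-4))).ncard = (b-3).toNat := by
      rw [Set.ncard_image_of_injective _ hinj0, ← Finset.coe_Icc,
        Set.ncard_coe_finset, Int.card_Icc]
      omega
    have hi1 : ((i:ℝ) + 1) ≠ 0 := by linarith
    have hB : ({((0:ℝ), (1:ℝ)), ((i:ℝ)+1, (1:ℝ)), ((0:ℝ), (2:ℝ))} : Set (ℝ × ℝ)).ncard = 3 := by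
      rw [Set.ncard_insert_of_notMem (by simp [Prod.ext_iff]; intro h; exact hi1 h.symm),
        Set.ncard_pair (by simp [Prod.ext_iff])]
    have hdisj : Disjoint ((fun m : ℤ => ((m:ℝ), (0:ℝ))) '' (Set.Icc 0 (b-4)))
        ({((0:ℝ), (1:ℝ)), ((i:ℝ)+1, (1:ℝ)), ((0:ℝ), (2:ℝ))} : Set (ℝ × ℝ)) := by
      rw [Set.disjoint_left]
      rintro p ⟨m, -, rfl⟩ hp
      simp only [Set.mem_insert_iff, Set.mem_singleton_iff, Prod.mk.injEq] at hp
      rcases hp with ⟨-, h⟩ | ⟨-, h⟩ | ⟨-, h⟩ <;> norm_num at h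
    rw [Set.ncard_union_eq hdisj ((Set.finite_Icc _ _).image _) (Set.toFinite _), hA, hB]
    omega
  · show ((icount (convexHull ℝ S) : ℤ)) = i
    unfold icount
    rw [show {x | x ∈ interior (convexHull ℝ S) ∧ latticePt x} =
        {x : ℝ × ℝ | x ∈ sregO i b ∧ latticePt x} by rw [hInt],
      int_lattice_eq i b hi hb4 hb, Set.ncard_image_of_injective _ hinj1,
      ← Finset.coe_Icc, Set.ncard_coe_finset, Int.card_Icc]
    omega
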